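/- Let E0 and E1 be filters with support intervals [−r0, r0] and [−r1−1, r1−1] respectively, and let S(z) be a filter with support interval [−t, t−1], t ≥ 1. If r1 ≤ r0 + 2t − 2, then E1'(z) = E1(z) + S(z^2)·E0(z) has support interval [−r0−2t, r0+2t−2], i.e., centered at −1 with support radius r0 + 2t − 1. -/

import Mathlib

noncomputable section

/-- FIR filters: Laurent polynomials over ℝ, `F(z) = Σ f(n) z^{-n}`,
represented by their coefficient function `n ↦ f n`; multiplication is convolution. -/
abbrev Filt := AddMonoidAlgebra ℝ ℤ

/-- `SuppInt f a b` : the support interval of `f` is `[a,b]` (so `f` is a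
nonzero FIR filter with `f a, f b ≠ 0` and all support in `[a,b]`). -/
def SuppInt (f : Filt) (a b : ℤ) : Prop :=
  f.coeff a ≠ 0 ∧ f.coeff b ≠ 0 ∧ ∀ n, f.coeff n ≠ 0 → a ≤ n ∧ n ≤ b

/-- Upsampling: `F(z) ↦ F(z²)`, i.e. `Σ f(n) z^{-2n}`. -/
def up (f : Filt) : Filt := AddMonoidAlgebra.ofCoeff (Finsupp.mapDomain (fun n : ℤ => 2 * n) f.coeff)

lemma mul_apply_lo (f g : Filt) (a c : ℤ)
    (hf : ∀ n, f.coeff n ≠ 0 → a ≤ n) (hg : ∀ n, g.coeff n ≠ 0 → c ≤ n) :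
    (f * g).coeff (a + c) = f.coeff a * g.coeff c := by
  classical
  rw [AddMonoidAlgebra.coeff_mul]
  rw [Finsupp.sum]
  rw [Finset.sum_eq_single a]
  · rw [Finsupp.sum, Finset.sum_eq_single c]
    · simp
    · intro j hj hjc
      have : c < j := lt_of_le_of_ne (hg j (Finsupp.mem_support_iff.mp hj)) (Ne.symm hjc)
      rw [if_neg]; omega
    · intro h
      simp [Finsupp.notMem_support_iff.mp h]
  · intro i hi hia
    have : a < i := lt_of_le_of_ne (hf i (Finsupp.mem_support_iff.mp hi)) (Ne.symm hia)
    rw [Finsupp.sum, Finset.sum_eq_zero]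
    intro j hj
    have : c ≤ j := hg j (Finsupp.mem_support_iff.mp hj)
    rw [if_neg]; omega
  · intro h
    simp [Finsupp.notMem_support_iff.mp h]

lemma mul_apply_hi (f g : Filt) (b d : ℤ)
    (hf : ∀ n, f.coeff n ≠ 0 → n ≤ b) (hg : ∀ n, g.coeff n ≠ 0 → n ≤ d) :
    (f * g).coeff (b + d) = f.coeff b * g.coeff d := by
  classical
  rw [AddMonoidAlgebra.coeff_mul]
  rw [Finsupp.sum]
  rw [Finset.sum_eq_single b]
  · rw [Finsupp.sum, Finset.sum_eq_single d]
    · simp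
    · intro j hj hjd
      have : j < d := lt_of_le_of_ne (hg j (Finsupp.mem_support_iff.mp hj)) hjd
      rw [if_neg]; omega
    · intro h
      simp [Finsupp.notMem_support_iff.mp h]
  · intro i hi hib
    have : i < b := lt_of_le_of_ne (hf i (Finsupp.mem_support_iff.mp hi)) hib
    rw [Finsupp.sum, Finset.sum_eq_zero]
    intro j hj
    have : j ≤ d := hg j (Finsupp.mem_support_iff.mp hj)
    rw [if_neg]; omega
  · intro h
    simp [Finsupp.notMem_support_iff.mp h]

lemma up_apply (f : Filt) (n : ℤ) : (up f).coeff (2 * n) = f.coeff n :=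
  Finsupp.mapDomain_apply (fun x y h => by omega) f.coeff n

lemma up_supp (f : Filt) (m : ℤ) (h : (up f).coeff m ≠ 0) : ∃ k, m = 2 * k ∧ f.coeff k ≠ 0 := by
  have hinj : Function.Injective (fun n : ℤ => 2 * n) := fun x y h => by
    simpa using h
  have := Finsupp.mapDomain_support_of_injective hinj f.coeff
  have hm : m ∈ (up f).coeff.support := Finsupp.mem_support_iff.mpr h
  rw [up, AddMonoidAlgebra.coeff_ofCoeff] at hm
  rw [this] at hm
  simp only [Finset.mem_image] at hm
  obtain ⟨k, hk, rfl⟩ := hm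
  exact ⟨k, rfl, Finsupp.mem_support_iff.mp hk⟩

/-- the highpass WS lifting update `E₁'(z) = E₁(z) + S(z²) E₀(z)`. -/
theorem ws_highpass_lift_suppInt (E0 E1 S : Filt) (r0 r1 t : ℤ) (ht : 1 ≤ t)
    (h0 : SuppInt E0 (-r0) r0) (h1 : SuppInt E1 (-r1 - 1) (r1 - 1))
    (hS : SuppInt S (-t) (t - 1)) (hle : r1 ≤ r0 + 2 * t - 2) :
    SuppInt (E1 + up S * E0) (-r0 - 2 * t) (r0 + 2 * t - 2) := by
  obtain ⟨h0l, h0r, h0s⟩ := h0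
  obtain ⟨h1l, h1r, h1s⟩ := h1
  obtain ⟨hSl, hSr, hSs⟩ := hS
  -- support bounds for up S
  have hupl : ∀ n, (up S).coeff n ≠ 0 → -(2*t) ≤ n ∧ n ≤ 2*t - 2 := by
    intro n hn
    obtain ⟨k, rfl, hk⟩ := up_supp S n hn
    have := hSs k hk
    omega
  have hupSl : (up S).coeff (2 * (-t)) ≠ 0 := by rw [up_apply]; exact hSl
  have hupSr : (up S).coeff (2 * (t-1)) ≠ 0 := by rw [up_apply]; exact hSr
  have hPl : (up S * E0).coeff (2 * (-t) + -r0) = (up S).coeff (2*(-t)) * E0.coeff (-r0) :=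
    mul_apply_lo _ _ _ _ (fun n hn => by have := hupl n hn; omega) (fun n hn => (h0s n hn).1)
  have hPr : (up S * E0).coeff (2 * (t-1) + r0) = (up S).coeff (2*(t-1)) * E0.coeff r0 :=
    mul_apply_hi _ _ _ _ (fun n hn => by have := hupl n hn; omega) (fun n hn => (h0s n hn).2)
  have hE1l : E1.coeff (-r0 - 2*t) = 0 := by
    by_contra h; have := h1s _ h; omega
  have hE1r : E1.coeff (r0 + 2*t - 2) = 0 := by
    by_contra h; have := h1s _ h; omega
  refine ⟨?_, ?_, ?_⟩
  · have heq : -r0 - 2*t = 2 * (-t) + -r0 := by ring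
    rw [AddMonoidAlgebra.coeff_add, Finsupp.add_apply, hE1l, heq, hPl, zero_add]
    exact mul_ne_zero hupSl h0l
  · have heq : r0 + 2*t - 2 = 2 * (t-1) + r0 := by ring
    rw [AddMonoidAlgebra.coeff_add, Finsupp.add_apply]
    rw [heq] at hE1r ⊢
    rw [hE1r, hPr, zero_add]
    exact mul_ne_zero hupSr h0r
  · intro n hn
    rw [AddMonoidAlgebra.coeff_add, Finsupp.add_apply] at hn
    rcases ne_or_eq (E1.coeff n) 0 with h | h
    · have := h1s n h
      rcases ne_or_eq ((up S * E0).coeff n) 0 with h2 | h2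
      · have hmem := AddMonoidAlgebra.support_coeff_mul_subset (up S) E0 (Finsupp.mem_support_iff.mpr h2)
        simp only [Finset.mem_add, Finsupp.mem_support_iff] at hmem
        obtain ⟨i, hi, j, hj, rfl⟩ := hmem
        have := hupl i hi
        have := h0s j hj
        omega
      · omega
    · rw [h, zero_add] at hn
      have hmem := AddMonoidAlgebra.support_coeff_mul_subset (up S) E0 (Finsupp.mem_support_iff.mpr hn)
      simp only [Finset.mem_add, Finsupp.mem_support_iff] at hmem
      obtain ⟨i, hi, j, hj, rfl⟩ := hmem
      have := hupl i hi
      have := h0s j hj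
      omega
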